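/- Let H be a 2×2 complex Hermitian matrix with det H = 1, let r ∈ ℝ, and let ξ ∈ ℂ² be a unit spinor with H ξ = e^r ξ. Then H = (cosh r)·I + (sinh r)·(σ·n_ξ) = exp(r · σ·n_ξ), where n_ξ ∈ ℝ³ has components (n_ξ)ᵢ = ⟨ξ, σᵢ ξ⟩. -/

import Mathlib

open Matrix

noncomputable section

/-- Pauli matrix σ₁. -/
def σ1 : Matrix (Fin 2) (Fin 2) ℂ := !![0, 1; 1, 0]
/-- Pauli matrix σ₂. -/
def σ2 : Matrix (Fin 2) (Fin 2) ℂ := !![0, -Complex.I; Complex.I, 0]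
/-- Pauli matrix σ₃. -/
def σ3 : Matrix (Fin 2) (Fin 2) ℂ := !![1, 0; 0, -1]

/-- The triple of Pauli matrices. -/
def pauli : Fin 3 → Matrix (Fin 2) (Fin 2) ℂ := ![σ1, σ2, σ3]

/-- σ·a = a₁σ₁ + a₂σ₂ + a₃σ₃ for a ∈ ℝ³. -/
def sigmaDot (a : Fin 3 → ℝ) : Matrix (Fin 2) (Fin 2) ℂ := ∑ i, (a i : ℂ) • pauli i

/-- The Hermitian inner product ⟨z,w⟩ = z̄₀w₀ + z̄₁w₁ on ℂ², conjugate-linear in the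
first argument. -/
def herm (z w : Fin 2 → ℂ) : ℂ := star (z 0) * w 0 + star (z 1) * w 1

/-- The antilinear map J(z₀,z₁) = (−z̄₁, z̄₀) on ℂ². -/
def Jmap (z : Fin 2 → ℂ) : Fin 2 → ℂ := ![-(star (z 1)), star (z 0)]

/-- The matrix ε = [[0,−1],[1,0]]. -/
def eps : Matrix (Fin 2) (Fin 2) ℂ := !![0, -1; 1, 0]

lemma key (a b c d x0 x1 y0 y1 E : ℂ) (hE : E ≠ 0)
    (h1 : a*x0 + b*x1 = E*x0) (h2 : c*x0 + d*x1 = E*x1)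
    (h3 : a*y0 + c*y1 = E*y0) (h4 : b*y0 + d*y1 = E*y1)
    (h5 : a*d - b*c = 1) (h6 : y0*x0 + y1*x1 = 1) :
    a = (E+E⁻¹)/2 + (E-E⁻¹)/2*(y0*x0-y1*x1) ∧ b = (E-E⁻¹)*(x0*y1) ∧
    c = (E-E⁻¹)*(y0*x1) ∧ d = (E+E⁻¹)/2 + (E-E⁻¹)/2*(y1*x1-y0*x0) := by
  have hEF : E * E⁻¹ = 1 := mul_inv_cancel₀ hE
  have ht : E*(a+d) = E^2+1 := by
    linear_combination ((E-d)*y0 + c*y1)*h1 + (b*y0 + (E-a)*y1)*h2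
      + (x0*y0+x1*y1)*h5 + (1+E^2-E*a-E*d)*h6
  have ht2 : a + d = E + E⁻¹ := by
    apply mul_left_cancel₀ hE
    linear_combination ht - hEF
  refine ⟨?_, ?_, ?_, ?_⟩
  · linear_combination y0*h1 - x1*h4 + ((E+E⁻¹)/2 - a)*h6 + x1*y1*ht2
  · linear_combination x0*h4 + y1*h1 - b*h6 - x0*y1*ht2
  · linear_combination y0*h2 + x1*h3 - c*h6 - x1*y0*ht2
  · linear_combination y1*h2 - x0*h3 + ((E+E⁻¹)/2 - d)*h6 + x0*y0*ht2

lemma diag2 (x y : ℂ) : Matrix.diagonal ![x, y] = !![x, 0; 0, y] := by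
  ext i j
  fin_cases i <;> fin_cases j <;>
    simp [Matrix.diagonal_apply_eq, Matrix.diagonal_apply_ne]

theorem stmt10 (H : Matrix (Fin 2) (Fin 2) ℂ) (hH : H.IsHermitian) (hdet : H.det = 1)
    (r : ℝ) (ξ : Fin 2 → ℂ) (hξ : herm ξ ξ = 1)
    (heig : H.mulVec ξ = (Real.exp r : ℂ) • ξ) :
    H = (Real.cosh r : ℂ) • (1 : Matrix (Fin 2) (Fin 2) ℂ)
        + (Real.sinh r : ℂ) • sigmaDot (fun i => (herm ξ ((pauli i).mulVec ξ)).re) ∧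
    H = NormedSpace.exp
        ((r : ℂ) • sigmaDot (fun i => (herm ξ ((pauli i).mulVec ξ)).re)) := by
  have hE0 : Complex.exp (r : ℂ) ≠ 0 := Complex.exp_ne_zero _
  have hEr : (Real.exp r : ℂ) = Complex.exp (r : ℂ) := Complex.ofReal_exp r
  have hEconj : (starRingEnd ℂ) (Complex.exp (r : ℂ)) = Complex.exp (r : ℂ) := by
    rw [← Complex.exp_conj, Complex.conj_ofReal]
  have h6 : (starRingEnd ℂ) (ξ 0) * ξ 0 + (starRingEnd ℂ) (ξ 1) * ξ 1 = 1 := hξ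
  have h5 : H 0 0 * H 1 1 - H 0 1 * H 1 0 = 1 := by
    rw [Matrix.det_fin_two] at hdet; exact hdet
  have h1 : H 0 0 * ξ 0 + H 0 1 * ξ 1 = Complex.exp (r : ℂ) * ξ 0 := by
    have h := congr_fun heig 0
    rw [hEr] at h
    simpa [Matrix.mulVec, dotProduct, Fin.sum_univ_two] using h
  have h2 : H 1 0 * ξ 0 + H 1 1 * ξ 1 = Complex.exp (r : ℂ) * ξ 1 := by
    have h := congr_fun heig 1
    rw [hEr] at h
    simpa [Matrix.mulVec, dotProduct, Fin.sum_univ_two] using h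
  have ha : (starRingEnd ℂ) (H 0 0) = H 0 0 := by
    simpa [Matrix.conjTranspose_apply, Complex.star_def] using congr_fun (congr_fun hH 0) 0
  have hdd : (starRingEnd ℂ) (H 1 1) = H 1 1 := by
    simpa [Matrix.conjTranspose_apply, Complex.star_def] using congr_fun (congr_fun hH 1) 1
  have hc : (starRingEnd ℂ) (H 0 1) = H 1 0 := by
    simpa [Matrix.conjTranspose_apply, Complex.star_def] using congr_fun (congr_fun hH 1) 0
  have hb : (starRingEnd ℂ) (H 1 0) = H 0 1 := by
    simpa [Matrix.conjTranspose_apply, Complex.star_def] using congr_fun (congr_fun hH 0) 1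
  have h3 : H 0 0 * (starRingEnd ℂ) (ξ 0) + H 1 0 * (starRingEnd ℂ) (ξ 1)
      = Complex.exp (r : ℂ) * (starRingEnd ℂ) (ξ 0) := by
    have h := congrArg (starRingEnd ℂ) h1
    simp only [map_add, _root_.map_mul, hEconj, ha, hc] at h
    linear_combination h
  have h4 : H 0 1 * (starRingEnd ℂ) (ξ 0) + H 1 1 * (starRingEnd ℂ) (ξ 1)
      = Complex.exp (r : ℂ) * (starRingEnd ℂ) (ξ 1) := by
    have h := congrArg (starRingEnd ℂ) h2
    simp only [map_add, _root_.map_mul, hEconj, hdd, hb] at h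
    linear_combination h
  obtain ⟨ga, gb, gc, gd⟩ := key (H 0 0) (H 0 1) (H 1 0) (H 1 1) (ξ 0) (ξ 1)
    ((starRingEnd ℂ) (ξ 0)) ((starRingEnd ℂ) (ξ 1)) (Complex.exp (r : ℂ)) hE0 h1 h2 h3 h4 h5 h6
  have hn1 : ((herm ξ (σ1.mulVec ξ)).re : ℂ)
      = (starRingEnd ℂ) (ξ 0) * ξ 1 + (starRingEnd ℂ) (ξ 1) * ξ 0 := by
    have hv : herm ξ (σ1.mulVec ξ)
        = (starRingEnd ℂ) (ξ 0) * ξ 1 + (starRingEnd ℂ) (ξ 1) * ξ 0 := by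
      simp [herm, σ1, Matrix.mulVec, dotProduct, Fin.sum_univ_two, Complex.star_def]
    rw [hv]
    apply Complex.conj_eq_iff_re.mp
    simp only [map_add, _root_.map_mul, Complex.conj_conj]
    ring
  have hn2 : ((herm ξ (σ2.mulVec ξ)).re : ℂ)
      = Complex.I * (ξ 0 * (starRingEnd ℂ) (ξ 1) - (starRingEnd ℂ) (ξ 0) * ξ 1) := by
    have hv : herm ξ (σ2.mulVec ξ)
        = Complex.I * (ξ 0 * (starRingEnd ℂ) (ξ 1) - (starRingEnd ℂ) (ξ 0) * ξ 1) := by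
      simp [herm, σ2, Matrix.mulVec, dotProduct, Fin.sum_univ_two, Complex.star_def]
      ring
    rw [hv]
    apply Complex.conj_eq_iff_re.mp
    simp only [map_sub, _root_.map_mul, Complex.conj_conj, Complex.conj_I]
    ring
  have hn3 : ((herm ξ (σ3.mulVec ξ)).re : ℂ)
      = (starRingEnd ℂ) (ξ 0) * ξ 0 - (starRingEnd ℂ) (ξ 1) * ξ 1 := by
    have hv : herm ξ (σ3.mulVec ξ)
        = (starRingEnd ℂ) (ξ 0) * ξ 0 - (starRingEnd ℂ) (ξ 1) * ξ 1 := by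
      simp [herm, σ3, Matrix.mulVec, dotProduct, Fin.sum_univ_two, Complex.star_def]
      ring
    rw [hv]
    apply Complex.conj_eq_iff_re.mp
    simp only [map_sub, _root_.map_mul, Complex.conj_conj]
    ring
  have hS : sigmaDot (fun i => (herm ξ ((pauli i).mulVec ξ)).re)
      = !![(starRingEnd ℂ) (ξ 0) * ξ 0 - (starRingEnd ℂ) (ξ 1) * ξ 1,
           2*(ξ 0 * (starRingEnd ℂ) (ξ 1));
           2*((starRingEnd ℂ) (ξ 0) * ξ 1),
           (starRingEnd ℂ) (ξ 1) * ξ 1 - (starRingEnd ℂ) (ξ 0) * ξ 0] := by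
    simp only [sigmaDot, Fin.sum_univ_three, show pauli 0 = σ1 from rfl,
      show pauli 1 = σ2 from rfl, show pauli 2 = σ3 from rfl, hn1, hn2, hn3]
    ext i j
    fin_cases i <;> fin_cases j
    · simp [σ1, σ2, σ3, Matrix.add_apply, Matrix.smul_apply]
    · simp [σ1, σ2, σ3, Matrix.add_apply, Matrix.smul_apply]
      linear_combination ((starRingEnd ℂ) (ξ 0) * ξ 1 - ξ 0 * (starRingEnd ℂ) (ξ 1))
        * Complex.I_mul_I
    · simp [σ1, σ2, σ3, Matrix.add_apply, Matrix.smul_apply]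
      linear_combination (ξ 0 * (starRingEnd ℂ) (ξ 1) - (starRingEnd ℂ) (ξ 0) * ξ 1)
        * Complex.I_mul_I
    · simp [σ1, σ2, σ3, Matrix.add_apply, Matrix.smul_apply]
  have hcosh : (Real.cosh r : ℂ) = (Complex.exp (r : ℂ) + (Complex.exp (r : ℂ))⁻¹)/2 := by
    rw [Real.cosh_eq]
    push_cast
    rw [Complex.exp_neg]
  have hsinh : (Real.sinh r : ℂ) = (Complex.exp (r : ℂ) - (Complex.exp (r : ℂ))⁻¹)/2 := by
    rw [Real.sinh_eq]
    push_cast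
    rw [Complex.exp_neg]
  have goal1 : H = (Real.cosh r : ℂ) • (1 : Matrix (Fin 2) (Fin 2) ℂ)
      + (Real.sinh r : ℂ) • sigmaDot (fun i => (herm ξ ((pauli i).mulVec ξ)).re) := by
    rw [hS, hcosh, hsinh, Matrix.one_fin_two]
    ext i j
    fin_cases i <;> fin_cases j
    · simp [Matrix.add_apply, Matrix.smul_apply]
      linear_combination ga
    · simp [Matrix.add_apply, Matrix.smul_apply]
      linear_combination gb
    · simp [Matrix.add_apply, Matrix.smul_apply]
      linear_combination gc
    · simp [Matrix.add_apply, Matrix.smul_apply]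
      linear_combination gd
  refine ⟨goal1, ?_⟩
  set V : Matrix (Fin 2) (Fin 2) ℂ :=
    !![ξ 0, -((starRingEnd ℂ) (ξ 1)); ξ 1, (starRingEnd ℂ) (ξ 0)] with hV
  set W : Matrix (Fin 2) (Fin 2) ℂ :=
    !![(starRingEnd ℂ) (ξ 0), (starRingEnd ℂ) (ξ 1); -(ξ 1), ξ 0] with hW
  have hVW : V * W = 1 := by
    rw [hV, hW, Matrix.one_fin_two]
    ext i j
    fin_cases i <;> fin_cases j
    · simp [Matrix.mul_apply, Fin.sum_univ_two]
      linear_combination h6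
    · simp [Matrix.mul_apply, Fin.sum_univ_two]
      ring
    · simp [Matrix.mul_apply, Fin.sum_univ_two]
      ring
    · simp [Matrix.mul_apply, Fin.sum_univ_two]
      linear_combination h6
  have hWV : W * V = 1 := by
    rw [hV, hW, Matrix.one_fin_two]
    ext i j
    fin_cases i <;> fin_cases j
    · simp [Matrix.mul_apply, Fin.sum_univ_two]
      linear_combination h6
    · simp [Matrix.mul_apply, Fin.sum_univ_two]
      ring
    · simp [Matrix.mul_apply, Fin.sum_univ_two]
      ring
    · simp [Matrix.mul_apply, Fin.sum_univ_two]
      linear_combination h6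
  set U : (Matrix (Fin 2) (Fin 2) ℂ)ˣ := ⟨V, W, hVW, hWV⟩ with hU
  have hconj : (r : ℂ) • sigmaDot (fun i => (herm ξ ((pauli i).mulVec ξ)).re)
      = (U : Matrix (Fin 2) (Fin 2) ℂ) * Matrix.diagonal ![(r : ℂ), -(r : ℂ)]
        * ((U⁻¹ : (Matrix (Fin 2) (Fin 2) ℂ)ˣ) : Matrix (Fin 2) (Fin 2) ℂ) := by
    rw [hS]
    show _ = V * Matrix.diagonal ![(r : ℂ), -(r : ℂ)] * W
    rw [diag2, hV, hW]
    ext i j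
    fin_cases i <;> fin_cases j <;>
      simp [Matrix.mul_apply, Fin.sum_univ_two, Matrix.smul_apply] <;>
      ring
  rw [hconj, Matrix.exp_units_conj, Matrix.exp_diagonal]
  have hdiagexp : NormedSpace.exp ![(r : ℂ), -(r : ℂ)]
      = ![Complex.exp (r : ℂ), (Complex.exp (r : ℂ))⁻¹] := by
    rw [Pi.exp_def]
    funext i
    fin_cases i
    · simp [← Complex.exp_eq_exp_ℂ]
    · simp [← Complex.exp_eq_exp_ℂ, Complex.exp_neg]
  rw [hdiagexp]
  show H = V * Matrix.diagonal ![Complex.exp (r : ℂ), (Complex.exp (r : ℂ))⁻¹] * W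
  rw [diag2, hV, hW]
  ext i j
  fin_cases i <;> fin_cases j
  · simp [Matrix.mul_apply, Fin.sum_univ_two]
    linear_combination ga - ((Complex.exp (r : ℂ) + (Complex.exp (r : ℂ))⁻¹)/2)*h6
  · simp [Matrix.mul_apply, Fin.sum_univ_two]
    linear_combination gb
  · simp [Matrix.mul_apply, Fin.sum_univ_two]
    linear_combination gc
  · simp [Matrix.mul_apply, Fin.sum_univ_two]
    linear_combination gd - ((Complex.exp (r : ℂ) + (Complex.exp (r : ℂ))⁻¹)/2)*h6
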